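/- Let C be a coalgebra which is a right A-module with action μ_C : C ⊗ A → C. Then the linear span I of all elements μ_C(c,a)_{(1)} α(μ_C(c,a)_{(2)}) − c_{(1)} α(μ_C(c_{(2)},a)), for a ∈ A, c ∈ C, α ∈ Hom(C,k), is a coideal of C (i.e. ε(I) = 0 and Δ(I) ⊆ C ⊗ I + I ⊗ C). -/

import Mathlib

open TensorProduct LinearMap Coalgebra

variable {k A C : Type*} [Field k] [Ring A] [Algebra k A]
  [AddCommGroup C] [Module k C] [Coalgebra k C]

/-- `μ : C ⊗ A → C` is a unital, associative right `A`-action on `C`. -/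
def IsAction (μ : C ⊗[k] A →ₗ[k] C) : Prop :=
  (∀ c : C, μ (c ⊗ₜ[k] (1 : A)) = c)
  ∧ (∀ (c : C) (a a' : A), μ (μ (c ⊗ₜ[k] a) ⊗ₜ[k] a') = μ (c ⊗ₜ[k] (a * a')))

/-- Action by a fixed element `a ∈ A`: `c ↦ μ(c ⊗ a)`. -/
noncomputable def actBy (μ : C ⊗[k] A →ₗ[k] C) (a : A) : C →ₗ[k] C :=
  μ ∘ₗ (TensorProduct.mk k C A).flip a

/-- The subspace `I` of Lemma 3.2: the span of all
`μ(c,a)₍₁₎ α(μ(c,a)₍₂₎) − c₍₁₎ α(μ(c₍₂₎,a))` for `a ∈ A`, `c ∈ C`, `α ∈ Hom(C,k)`. -/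
noncomputable def coidealI (μ : C ⊗[k] A →ₗ[k] C) : Submodule k C :=
  Submodule.span k {x : C | ∃ (a : A) (c : C) (α : C →ₗ[k] k), x =
    TensorProduct.rid k C (α.lTensor C (comul (R := k) (μ (c ⊗ₜ[k] a))))
      - TensorProduct.rid k C ((α ∘ₗ actBy μ a).lTensor C (comul (R := k) c))}



set_option linter.unusedSectionVars false

/-- Contraction of the right tensor factor with a functional. -/
noncomputable def crX (X : Type*) [AddCommGroup X] [Module k X] (β : C →ₗ[k] k) :
    X ⊗[k] C →ₗ[k] X :=
  (TensorProduct.rid k X).toLinearMap ∘ₗ β.lTensor X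

@[simp] lemma crX_apply {X : Type*} [AddCommGroup X] [Module k X] (β : C →ₗ[k] k)
    (x : X ⊗[k] C) : crX X β x = TensorProduct.rid k X (β.lTensor X x) := rfl

lemma crX_tmul {X : Type*} [AddCommGroup X] [Module k X] (β : C →ₗ[k] k) (x : X) (y : C) :
    crX X β (x ⊗ₜ[k] y) = β y • x := by
  simp [TensorProduct.smul_tmul', TensorProduct.rid_tmul]

lemma crX_natural {X Y : Type*} [AddCommGroup X] [Module k X] [AddCommGroup Y] [Module k Y]
    (g : X →ₗ[k] Y) (β : C →ₗ[k] k) :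
    g ∘ₗ crX X β = crX Y β ∘ₗ g.rTensor C := by
  apply TensorProduct.ext'
  intro x y
  simp [crX_tmul, rTensor_tmul, map_smul]

lemma crX_lTensor (β : C →ₗ[k] k) (g : C →ₗ[k] C) (x : C ⊗[k] C) :
    crX C β (g.lTensor C x) = crX C (β ∘ₗ g) x := by
  simp [← lTensor_comp_apply]

/-- `φ_β(x) = x₁ β(x₂)`. -/
noncomputable def phiB (β : C →ₗ[k] k) : C →ₗ[k] C := crX C β ∘ₗ comul

lemma crX_assoc_symm (β : C →ₗ[k] k) :
    crX (C ⊗[k] C) β ∘ₗ (TensorProduct.assoc k C C C).symm.toLinearMap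
      = (crX C β).lTensor C := by
  apply TensorProduct.ext'
  intro x yz
  induction yz using TensorProduct.induction_on with
  | zero => simp
  | tmul y z => simp [crX_tmul, TensorProduct.tmul_smul, TensorProduct.smul_tmul']
  | add u v hu hv => simp_all [TensorProduct.tmul_add]

lemma comul_phiB (β : C →ₗ[k] k) (x : C) :
    comul (R := k) (phiB β x) = (phiB β).lTensor C (comul (R := k) x) := by
  have h1 : comul (R := k) ∘ₗ crX C β = crX (C ⊗[k] C) β ∘ₗ (comul (R := k)).rTensor C :=
    crX_natural _ _
  have h2 := Coalgebra.coassoc_symm (R := k) (A := C)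
  calc comul (R := k) (phiB β x)
      = (comul (R := k) ∘ₗ crX C β) (comul (R := k) x) := rfl
    _ = crX (C ⊗[k] C) β (((comul (R := k)).rTensor C ∘ₗ comul (R := k)) x) := by rw [h1]; rfl
    _ = crX (C ⊗[k] C) β (((TensorProduct.assoc k C C C).symm.toLinearMap
          ∘ₗ (comul (R := k)).lTensor C ∘ₗ comul (R := k)) x) := by rw [h2]
    _ = ((crX C β).lTensor C) ((comul (R := k)).lTensor C (comul (R := k) x)) := by
          rw [← crX_assoc_symm β]; rfl
    _ = (phiB β).lTensor C (comul (R := k) x) := by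
          rw [phiB, lTensor_comp]; rfl

lemma counit_phiB (β : C →ₗ[k] k) (x : C) : counit (R := k) (phiB β x) = β x := by
  have h1 : counit (R := k) ∘ₗ crX C β = crX k β ∘ₗ (counit (R := k)).rTensor C :=
    crX_natural _ _
  have : counit (R := k) (phiB β x)
      = crX k β (((counit (R := k)).rTensor C ∘ₗ comul (R := k)) x) := by
    exact LinearMap.congr_fun h1 (comul (R := k) x)
  rw [this, Coalgebra.rTensor_counit_comp_comul]
  simp [crX_tmul, TensorProduct.mk_apply]

lemma mem_range_rTensor_of_contract (I : Submodule k C) (t : C ⊗[k] C)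
    (h : ∀ β : C →ₗ[k] k, crX C β t ∈ I) :
    t ∈ LinearMap.range (I.subtype.rTensor C) := by
  classical
  set b := Module.Basis.ofVectorSpace k C with hb
  set ι := Module.Basis.ofVectorSpaceIndex k C
  set E : C ⊗[k] C ≃ₗ[k] (ι →₀ C) :=
    (LinearEquiv.lTensor C b.repr).trans (TensorProduct.finsuppScalarRight k k C ι) with hE
  have hcomp : ∀ i : ι, E t i = crX C (Finsupp.lapply i ∘ₗ (b.repr : C →ₗ[k] (ι →₀ k))) t := by
    intro i
    rw [hE, LinearEquiv.trans_apply, TensorProduct.finsuppScalarRight_apply, crX_apply,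
      lTensor_comp_apply]
    rfl
  have key : ∀ i : ι, E t i ∈ I := fun i => hcomp i ▸ h _
  have hsymm : ∀ p : ι →₀ C, E.symm p = ∑ i ∈ p.support, p i ⊗ₜ[k] (b i : C) := by
    intro p
    conv_lhs => rw [← Finsupp.sum_single p]
    rw [Finsupp.sum, map_sum]
    refine Finset.sum_congr rfl fun i _ => ?_
    rw [hE, LinearEquiv.trans_symm, LinearEquiv.trans_apply,
      TensorProduct.finsuppScalarRight_symm_apply_single, LinearEquiv.lTensor_symm_tmul,
      Module.Basis.repr_symm_single_one]
  have hrec := hsymm (E t)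
  rw [E.symm_apply_apply] at hrec
  refine ⟨∑ i ∈ (E t).support, (⟨E t i, key i⟩ : I) ⊗ₜ[k] (b i : C), ?_⟩
  rw [map_sum]
  simp only [rTensor_tmul, Submodule.coe_subtype]
  exact hrec.symm

/-- Lemma 3.2: the span `I` of the elements
`μ(c,a)₍₁₎ α(μ(c,a)₍₂₎) − c₍₁₎ α(μ(c₍₂₎,a))` is a coideal of `C`:
`ε(I) = 0` and `Δ(I) ⊆ C ⊗ I + I ⊗ C`. -/
theorem coidealI_isCoideal (μ : C ⊗[k] A →ₗ[k] C) (hμ : IsAction μ) :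
    (∀ x ∈ coidealI μ, counit (R := k) x = 0)
    ∧ (∀ x ∈ coidealI μ, comul (R := k) x ∈
        LinearMap.range ((coidealI μ).subtype.lTensor C)
          ⊔ LinearMap.range ((coidealI μ).subtype.rTensor C)) := by
  -- the generator as a linear map in `c`
  have hgen_eq : ∀ (a : A) (α : C →ₗ[k] k) (c : C),
      TensorProduct.rid k C (α.lTensor C (comul (R := k) (μ (c ⊗ₜ[k] a))))
        - TensorProduct.rid k C ((α ∘ₗ actBy μ a).lTensor C (comul (R := k) c))
      = phiB α (actBy μ a c) - phiB (α ∘ₗ actBy μ a) c := fun a α c => rfl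
  have hgen_mem : ∀ (a : A) (α : C →ₗ[k] k) (c : C),
      phiB α (actBy μ a c) - phiB (α ∘ₗ actBy μ a) c ∈ coidealI μ := by
    intro a α c
    exact Submodule.subset_span ⟨a, c, α, (hgen_eq a α c).symm⟩
  constructor
  · intro x hx
    have hker : x ∈ LinearMap.ker (counit (R := k) (A := C)) := by
      refine Submodule.span_le.2 ?_ hx
      rintro y ⟨a, c, α, rfl⟩
      rw [SetLike.mem_coe, LinearMap.mem_ker, hgen_eq a α c, map_sub, counit_phiB, counit_phiB]
      simp
    exact LinearMap.mem_ker.1 hker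
  · intro x hx
    refine Submodule.span_le (p := Submodule.comap (comul (R := k))
      (LinearMap.range ((coidealI μ).subtype.lTensor C)
        ⊔ LinearMap.range ((coidealI μ).subtype.rTensor C))) |>.2 ?_ hx
    rintro x ⟨a, c, α, rfl⟩
    rw [SetLike.mem_coe, Submodule.mem_comap, hgen_eq a α c]
    set ρ := actBy μ a with hρ
    set T : C →ₗ[k] C ⊗[k] C := comul ∘ₗ ρ - ρ.lTensor C ∘ₗ comul with hT
    have hTmem : ∀ (β : C →ₗ[k] k) (c' : C), crX C β (T c') ∈ coidealI μ := by
      intro β c'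
      have : crX C β (T c') = phiB β (ρ c') - phiB (β ∘ₗ ρ) c' := by
        rw [hT]
        simp only [LinearMap.sub_apply, LinearMap.comp_apply, map_sub, crX_lTensor]
        rfl
      rw [this]
      exact hgen_mem a β c'
    have split : comul (R := k) (phiB α (ρ c) - phiB (α ∘ₗ ρ) c)
        = (phiB α).lTensor C (T c)
          + (phiB α ∘ₗ ρ - phiB (α ∘ₗ ρ)).lTensor C (comul (R := k) c) := by
      rw [map_sub, comul_phiB, comul_phiB, hT, lTensor_sub]
      simp only [LinearMap.sub_apply, LinearMap.comp_apply, map_sub, lTensor_sub,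
        lTensor_comp, LinearMap.comp_apply]
      abel
    rw [split]
    refine Submodule.add_mem _ ?_ ?_
    · -- first summand lies in I ⊗ C
      obtain ⟨s, hs⟩ := mem_range_rTensor_of_contract (coidealI μ) (T c)
        (fun β => hTmem β c)
      refine Submodule.mem_sup_right ⟨(phiB α).lTensor _ s, ?_⟩
      rw [← hs, ← LinearMap.comp_apply, ← LinearMap.comp_apply,
        LinearMap.lTensor_comp_rTensor, LinearMap.rTensor_comp_lTensor]
    · -- second summand lies in C ⊗ I
      set g : C →ₗ[k] C := phiB α ∘ₗ ρ - phiB (α ∘ₗ ρ) with hg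
      have hgI : ∀ c', g c' ∈ coidealI μ := fun c' => hgen_mem a α c'
      set g' : C →ₗ[k] coidealI μ := g.codRestrict (coidealI μ) hgI with hg'
      refine Submodule.mem_sup_left ⟨g'.lTensor C (comul (R := k) c), ?_⟩
      rw [← lTensor_comp_apply]
      congr 1
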